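/- Soundness of sub-invariants for lower bounds: suppose ∑' τ, W σ τ = 1 for every σ (the loop is AST) and the post-expectation E : Σ → ℝ≥0∞ satisfies E ≤ 1 pointwise. If I : Σ → ℝ≥0∞ is a sub-invariant bounded by one, i.e., I ≤ 1 pointwise and I ≤ Φ_E I pointwise, and if a pre-expectation preE : Σ → ℝ≥0∞ satisfies preE ≤ I pointwise, then preE ≤ lfp Φ_E pointwise; that is, preE lower-bounds the weakest pre-expectation of the loop with respect to E. -/

import Mathlib

open ENNReal

/-- The characteristic function of the loop `while G do body` with respect to
post-expectation `E`. -/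
noncomputable def Phi {S : Type*} (G : S → Prop) [DecidablePred G] (body : S → PMF S)
    (E : S → ℝ≥0∞) (X : S → ℝ≥0∞) : S → ℝ≥0∞ :=
  fun σ => if G σ then ∑' τ, body σ τ * X τ else E σ

theorem Phi_monotone {S : Type*} (G : S → Prop) [DecidablePred G] (body : S → PMF S)
    (E : S → ℝ≥0∞) : Monotone (Phi G body E) := by
  intro X Y hXY σ
  simp only [Phi]
  split
  · exact ENNReal.tsum_le_tsum fun τ => mul_le_mul_of_nonneg_left (hXY τ) zero_le
  · exact le_rfl

/-- The characteristic function, bundled as a monotone map on the complete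
lattice of expectations. -/
noncomputable def PhiHom {S : Type*} (G : S → Prop) [DecidablePred G] (body : S → PMF S)
    (E : S → ℝ≥0∞) : (S → ℝ≥0∞) →o (S → ℝ≥0∞) :=
  ⟨Phi G body E, Phi_monotone G body E⟩

/-- The stopped `n`-step kernels of the loop `while G do body`. -/
noncomputable def mu {S : Type*} (G : S → Prop) [DecidablePred G] [DecidableEq S]
    (body : S → PMF S) : ℕ → S → S → ℝ≥0∞
  | 0 => fun σ τ => if ¬ G σ ∧ τ = σ then 1 else 0
  | n + 1 => fun σ =>
      if G σ then (fun τ => ∑' σ', body σ σ' * mu G body n σ' τ) else mu G body 0 σ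

/-- The loop's output sub-distribution. -/
noncomputable def W {S : Type*} (G : S → Prop) [DecidablePred G] [DecidableEq S]
    (body : S → PMF S) (σ τ : S) : ℝ≥0∞ :=
  ⨆ n, mu G body n σ τ

/-! Auxiliary material -/

/-- Monotone convergence for `tsum` over `ℝ≥0∞`. -/
lemma my_tsum_iSup {α : Type*} {f : ℕ → α → ℝ≥0∞} (hf : ∀ a, Monotone fun n => f n a) :
    ∑' a, ⨆ n, f n a = ⨆ n, ∑' a, f n a := by
  refine le_antisymm ?_ (iSup_le fun n => ENNReal.tsum_le_tsum fun a => le_iSup (fun n => f n a) n)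
  rw [ENNReal.tsum_eq_iSup_sum]
  refine iSup_le fun s => ?_
  rw [ENNReal.finsetSum_iSup_of_monotone (f := fun a n => f n a) hf]
  exact iSup_mono fun n => ENNReal.sum_le_tsum s

/-- The "non-termination" iterates. -/
noncomputable def NT {S : Type*} (G : S → Prop) [DecidablePred G] (body : S → PMF S) :
    ℕ → S → ℝ≥0∞ :=
  fun n => (Phi G body (fun _ => 0))^[n] (fun _ => 1)

lemma NT_zero {S : Type*} (G : S → Prop) [DecidablePred G] (body : S → PMF S) :
    NT G body 0 = fun _ => 1 := rfl

lemma NT_succ {S : Type*} (G : S → Prop) [DecidablePred G] (body : S → PMF S) (n : ℕ) :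
    NT G body (n + 1) = Phi G body (fun _ => 0) (NT G body n) := by
  simp [NT, Function.iterate_succ_apply']

lemma mu_succ' {S : Type*} (G : S → Prop) [DecidablePred G] [DecidableEq S]
    (body : S → PMF S) (n : ℕ) (σ : S) :
    mu G body (n + 1) σ =
      if G σ then (fun τ => ∑' σ', body σ σ' * mu G body n σ' τ) else mu G body 0 σ := by
  simp only [mu]

lemma mu_mono {S : Type*} (G : S → Prop) [DecidablePred G] [DecidableEq S]
    (body : S → PMF S) : ∀ n σ τ, mu G body n σ τ ≤ mu G body (n + 1) σ τ := by
  intro n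
  induction n with
  | zero =>
    intro σ τ
    by_cases hG : G σ
    · simp [mu, hG]
    · simp [mu, hG]
  | succ n ih =>
    intro σ τ
    rw [mu_succ', mu_succ']
    by_cases hG : G σ
    · rw [if_pos hG, if_pos hG]
      exact ENNReal.tsum_le_tsum fun σ' => mul_le_mul_right (ih σ' τ) _
    · rw [if_neg hG, if_neg hG]

/-- Key balance equation: after `n` steps, the terminated mass plus the
still-running mass is `1`. -/
lemma mu_NT_balance {S : Type*} (G : S → Prop) [DecidablePred G] [DecidableEq S]
    (body : S → PMF S) : ∀ n σ, (∑' τ, mu G body n σ τ) + NT G body (n + 1) σ = 1 := by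
  intro n
  induction n with
  | zero =>
    intro σ
    by_cases hG : G σ
    · have h1 : (∑' τ : S, mu G body 0 σ τ) = 0 := by
        simp [mu, hG]
      simp [h1, NT_succ, NT_zero, Phi, hG, (body σ).tsum_coe]
    · have h1 : (∑' τ : S, mu G body 0 σ τ) = 1 := by
        simp only [mu, hG, not_false_iff, true_and]
        exact tsum_ite_eq σ 1
      simp [h1, NT_succ, NT_zero, Phi, hG]
  | succ n ih =>
    intro σ
    by_cases hG : G σ
    · have h1 : (∑' τ, mu G body (n + 1) σ τ) =
          ∑' σ', body σ σ' * ∑' τ, mu G body n σ' τ := by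
        rw [mu_succ', if_pos hG]
        rw [ENNReal.tsum_comm]
        exact tsum_congr fun σ' => ENNReal.tsum_mul_left
      have h2 : NT G body (n + 2) σ = ∑' σ', body σ σ' * NT G body (n + 1) σ' := by
        rw [NT_succ]; simp [Phi, hG]
      rw [h1, h2, ← ENNReal.tsum_add]
      calc (∑' σ', (body σ σ' * ∑' τ, mu G body n σ' τ + body σ σ' * NT G body (n + 1) σ'))
          = ∑' σ', body σ σ' * ((∑' τ, mu G body n σ' τ) + NT G body (n + 1) σ') := by
            exact tsum_congr fun σ' => (mul_add _ _ _).symm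
        _ = ∑' σ', body σ σ' := by
            exact tsum_congr fun σ' => by rw [ih σ', mul_one]
        _ = 1 := (body σ).tsum_coe
    · have h1 : (∑' τ, mu G body (n + 1) σ τ) = 1 := by
        simp only [mu, hG, if_false, not_false_iff, true_and]
        exact tsum_ite_eq σ 1
      have h2 : NT G body (n + 2) σ = 0 := by
        rw [NT_succ]; simp [Phi, hG]
      rw [h1, h2, add_zero]

/-- soundness of sub-invariants for lower bounds on the weakest
pre-expectation, for almost surely terminating loops and post-expectations
bounded by one. -/
theorem subinvariant_lower_bound {S : Type*} [Countable S] [DecidableEq S]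
    (G : S → Prop) [DecidablePred G] (body : S → PMF S)
    (hAST : ∀ σ : S, ∑' τ, W G body σ τ = 1)
    (E : S → ℝ≥0∞) (hE : ∀ σ, E σ ≤ 1)
    (I : S → ℝ≥0∞) (hI : ∀ σ, I σ ≤ 1)
    (hsub : ∀ σ, I σ ≤ Phi G body E I σ)
    (preE : S → ℝ≥0∞) (hpre : ∀ σ, preE σ ≤ I σ) :
    ∀ σ, preE σ ≤ OrderHom.lfp (PhiHom G body E) σ := by
  set L : S → ℝ≥0∞ := OrderHom.lfp (PhiHom G body E) with hL
  have hfix : Phi G body E L = L := OrderHom.map_lfp (PhiHom G body E)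
  -- superposition: Φ_E (X + Y) = Φ_E X + Φ_0 Y
  have hsuper : ∀ X Y : S → ℝ≥0∞, ∀ σ,
      Phi G body E (fun τ => X τ + Y τ) σ =
      Phi G body E X σ + Phi G body (fun _ => 0) Y σ := by
    intro X Y σ
    by_cases hG : G σ
    · simp only [Phi, hG, if_true]
      rw [← ENNReal.tsum_add]
      exact tsum_congr fun τ => mul_add _ _ _
    · simp [Phi, hG]
  -- main induction: I ≤ L + NT n
  have hmain : ∀ n σ, I σ ≤ L σ + NT G body n σ := by
    intro n
    induction n with
    | zero =>
      intro σ
      calc I σ ≤ 1 := hI σ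
        _ ≤ L σ + 1 := le_add_self
        _ = L σ + NT G body 0 σ := by rw [NT_zero]
    | succ n ih =>
      intro σ
      calc I σ ≤ Phi G body E I σ := hsub σ
        _ ≤ Phi G body E (fun τ => L τ + NT G body n τ) σ :=
            Phi_monotone G body E ih σ
        _ = Phi G body E L σ + Phi G body (fun _ => 0) (NT G body n) σ :=
            hsuper _ _ σ
        _ = L σ + NT G body (n + 1) σ := by rw [hfix, NT_succ]
  -- the non-termination mass tends to 0
  have hNT0 : ∀ σ, (⨅ n, NT G body (n + 1) σ) = 0 := by
    intro σ
    have hmono : ∀ τ : S, Monotone fun n => mu G body n σ τ := fun τ =>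
      monotone_nat_of_le_succ fun n => mu_mono G body n σ τ
    have hsupsum : (⨆ n, ∑' τ, mu G body n σ τ) = 1 := by
      rw [← my_tsum_iSup hmono]
      exact hAST σ
    have hsum_le : ∀ n, (∑' τ, mu G body n σ τ) ≤ 1 := fun n =>
      le_trans le_self_add (le_of_eq (mu_NT_balance G body n σ))
    have hNT_eq : ∀ n, NT G body (n + 1) σ = 1 - ∑' τ, mu G body n σ τ := by
      intro n
      have hb := mu_NT_balance G body n σ
      have hne : (∑' τ, mu G body n σ τ) ≠ ∞ := ne_top_of_le_ne_top one_ne_top (hsum_le n)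
      rw [add_comm] at hb
      exact ENNReal.eq_sub_of_add_eq hne hb
    calc (⨅ n, NT G body (n + 1) σ) = ⨅ n, (1 - ∑' τ, mu G body n σ τ) := by
          exact iInf_congr hNT_eq
      _ = 1 - ⨆ n, ∑' τ, mu G body n σ τ := (ENNReal.sub_iSup one_ne_top).symm
      _ = 0 := by rw [hsupsum, tsub_self]
  intro σ
  calc preE σ ≤ I σ := hpre σ
    _ ≤ ⨅ n, (L σ + NT G body (n + 1) σ) := le_iInf fun n => hmain (n + 1) σ
    _ = L σ + ⨅ n, NT G body (n + 1) σ := ENNReal.add_iInf.symm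
    _ = L σ := by rw [hNT0 σ, add_zero]
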